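/- arXiv:1905.11432 — 2 statements merged into one kernel-verified Lean document; each statement's English description precedes it below -/
import Mathlib

section
/- Let Λ′ be an A-lattice of finite rank in C and let λ ∈ C ∖ Λ′ satisfy |λ − μ| = max(|λ|, |μ|) for every nonzero μ ∈ Λ′. Then |e_{Λ′}(λ)| = |λ| · ∏_{0≠μ∈Λ′, |μ|≤|λ|} (|λ|/|μ|), where the product on the right has finitely many factors. In particular e_{Λ′}(λ) ≠ 0 and |e_{Λ′}(λ)| depends only on |λ|. -/
open Polynomial

set_option linter.unusedSectionVars false
set_option synthInstance.maxHeartbeats 400000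
set_option maxHeartbeats 1000000

noncomputable section

namespace DrinfeldPeriods

/-! ## The basic setting

`Fq` is the finite field with `q` elements, `Kinf Fq = F_q((T⁻¹))` is the field of formal
Laurent series in `T⁻¹` (realized as Laurent series in a variable `X` with `T := X⁻¹`),
and `C` is a complete algebraically closed nonarchimedean normed field whose norm extends
the absolute value of `K∞` normalized by `|T| = q`.  (The completed algebraic closure of
`K∞` is such a field.) -/

variable (Fq : Type*) [Field Fq] [Fintype Fq]

/-- `K∞ = F_q((T⁻¹))`, realized as the field of Laurent series over `F_q`; the element `T`
is the inverse of the canonical variable. -/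
abbrev Kinf := LaurentSeries Fq

/-- The element `T ∈ K∞`: the Laurent series `X⁻¹`, which has order `-1`,
i.e. absolute value `q`. -/
def Tinf : Kinf Fq := HahnSeries.single (-1 : ℤ) (1 : Fq)

variable (C : Type*) [NormedField C] [IsUltrametricDist C] [CompleteSpace C] [IsAlgClosed C]
  [Algebra (Kinf Fq) C]

/-- The norm of `C` restricts on `K∞` to the absolute value `|x| = q^{-v(x)}`
normalized by `|T| = q`. -/
def NormExtends : Prop :=
  ∀ x : Kinf Fq, x ≠ 0 → ‖algebraMap (Kinf Fq) C x‖ = (Fintype.card Fq : ℝ) ^ (-(x.order))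

/-- The image of `T` in `C`. -/
def TC : C := algebraMap (Kinf Fq) C (Tinf Fq)

/-- The canonical embedding `F_q → C`. -/
def FqC : Fq →+* C := (algebraMap (Kinf Fq) C).comp HahnSeries.C

/-- The action of `A = F_q[T]` on `C`: evaluation of polynomials at `T`. -/
def Amap : Polynomial Fq →+* C := eval₂RingHom (FqC Fq C) (TC Fq C)

/-- `Λ` is an `A`-lattice of rank `r` in `C`: an `A`-submodule of `C` which is discrete
(every bounded subset contains only finitely many lattice points) and free of rank `r`
over `A`. -/
structure IsLattice (Λ : Set C) (r : ℕ) : Prop where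
  zero_mem : (0 : C) ∈ Λ
  add_mem : ∀ x ∈ Λ, ∀ y ∈ Λ, x + y ∈ Λ
  smul_mem : ∀ (a : Polynomial Fq), ∀ x ∈ Λ, Amap Fq C a * x ∈ Λ
  discrete : ∀ B : ℝ, {x | x ∈ Λ ∧ ‖x‖ ≤ B}.Finite
  free : ∃ b : Fin r → C, (∀ i, b i ∈ Λ) ∧
    ∀ x ∈ Λ, ∃! a : Fin r → Polynomial Fq, x = ∑ i, Amap Fq C (a i) * b i

/-- `lam` is an `A`-basis of `Λ`. -/
def IsABasis {r : ℕ} (Λ : Set C) (lam : Fin r → C) : Prop :=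
  (∀ i, lam i ∈ Λ) ∧
    ∀ x ∈ Λ, ∃! a : Fin r → Polynomial Fq, x = ∑ i, Amap Fq C (a i) * lam i

/-- The `A`-span of the `lam j`, `j < i`. -/
def spanBelow {r : ℕ} (lam : Fin r → C) (i : Fin r) : Set C :=
  {y | ∃ a : Fin r → Polynomial Fq,
    y = ∑ j ∈ Finset.univ.filter (fun j => j < i), Amap Fq C (a j) * lam j}

/-- `lam` is a successive minimum basis (SMB) of `Λ`: each `lam i` lies in `Λ` outside the
`A`-span of the previous ones and has minimal absolute value among such elements. -/
def IsSMB {r : ℕ} (Λ : Set C) (lam : Fin r → C) : Prop :=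
  ∀ i : Fin r, lam i ∈ Λ ∧ lam i ∉ spanBelow Fq C lam i ∧
    ∀ x ∈ Λ, x ∉ spanBelow Fq C lam i → ‖lam i‖ ≤ ‖x‖

/-- The exponential function `e_Λ(z) = z ∏'_{0 ≠ μ ∈ Λ} (1 - z/μ)` of a lattice `Λ`. -/
def latticeExp (Λ : Set C) (z : C) : C :=
  z * ∏' μ : {x : C // x ∈ Λ ∧ x ≠ 0}, (1 - z / (μ : C))

/-- `Λ` is the period lattice of the rank-`r` Drinfeld module `φ` over `L` with
`φ_T(X) = TX + g 1 · X^q + ⋯ + g r · X^{q^r}`:  it is a rank-`r` lattice whose exponential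
function satisfies `e_Λ(Tz) = T e_Λ(z) + ∑ g i e_Λ(z)^{q^i}`. -/
def IsPeriodLattice (Λ : Set C) (r : ℕ) (g : ℕ → C) : Prop :=
  IsLattice Fq C Λ r ∧ ∀ z : C,
    latticeExp C Λ (TC Fq C * z) =
      TC Fq C * latticeExp C Λ z +
        ∑ i ∈ Finset.range r, g (i + 1) * latticeExp C Λ z ^ Fintype.card Fq ^ (i + 1)

/-! ## Subfields of `C`, ramification index and residue class degree -/

/-- `K∞` as a subfield of `C`. -/
def KinfSub : Subfield C := (algebraMap (Kinf Fq) C).fieldRange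

variable {C} in
/-- The subfield of `C` generated by a subfield `E` together with a set `S`. -/
def adjoinSet (E : Subfield C) (S : Set C) : Subfield C := Subfield.closure (↑E ∪ S)

variable {C} in
theorem le_adjoinSet (E : Subfield C) (S : Set C) : E ≤ adjoinSet E S :=
  fun _ hx => Subfield.subset_closure (Or.inl hx)

variable {C} in
/-- The algebra structure on an extension of subfields of `C`. -/
def algOfLE {E E' : Subfield C} (h : E ≤ E') : Algebra E E' :=
  (Subfield.inclusion h).toAlgebra

variable {C} in
/-- `E'` is a finite extension of `E`. -/
def IsFiniteExt {E E' : Subfield C} (h : E ≤ E') : Prop :=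
  letI := algOfLE h
  FiniteDimensional E E'

variable {C} in
/-- The degree `[E' : E]` of an extension of subfields of `C`. -/
def fieldDeg {E E' : Subfield C} (h : E ≤ E') : ℕ :=
  letI := algOfLE h
  Module.finrank E E'

variable {C} in
/-- `E'/E` is a Galois extension. -/
def IsGaloisExt {E E' : Subfield C} (h : E ≤ E') : Prop :=
  letI := algOfLE h
  IsGalois E E'

variable {C} in
/-- The order of the Galois group (= group of `E`-algebra automorphisms) of `E'/E`. -/
def galCard {E E' : Subfield C} (h : E ≤ E') : ℕ :=
  letI := algOfLE h
  Nat.card (E' ≃ₐ[E] E')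

variable {C} in
/-- The Galois group of `E'/E` is abelian. -/
def GalAbelian {E E' : Subfield C} (h : E ≤ E') : Prop :=
  letI := algOfLE h
  ∀ σ τ : E' ≃ₐ[E] E', σ * τ = τ * σ

variable {C} in
/-- Every element of the Galois group of `E'/E` has order dividing `n`. -/
def GalExponentDvd {E E' : Subfield C} (h : E ≤ E') (n : ℕ) : Prop :=
  letI := algOfLE h
  ∀ σ : E' ≃ₐ[E] E', σ ^ n = 1

variable {C} in
/-- The Galois group of `E'/E` is cyclic. -/
def GalCyclic {E E' : Subfield C} (h : E ≤ E') : Prop :=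
  letI := algOfLE h
  IsCyclic (E' ≃ₐ[E] E')

/-- The value group `|Eˣ| ⊆ ℝˣ` of a subfield of `C`. -/
def valueGroup (E : Subfield C) : Subgroup ℝˣ :=
  Subgroup.closure {u : ℝˣ | ∃ x : E, x ≠ 0 ∧ (u : ℝ) = ‖(x : C)‖}

/-- The ramification index `e(E'|E)`: the index of the value group of `E` in that
of `E'`. -/
def ramIndex (E E' : Subfield C) : ℕ :=
  (valueGroup C E).relIndex (valueGroup C E')

/-- The valuation ring `O_E = {x ∈ E : |x| ≤ 1}` of a subfield `E` of `C`. -/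
def integers (E : Subfield C) : Subring E where
  carrier := {x | ‖(x : C)‖ ≤ 1}
  one_mem' := by simp
  mul_mem' := by
    intro a b ha hb
    simp only [Set.mem_setOf_eq] at *
    push_cast
    rw [norm_mul]
    exact mul_le_one₀ ha (norm_nonneg _) hb
  zero_mem' := by simp
  add_mem' := by
    intro a b ha hb
    simp only [Set.mem_setOf_eq] at *
    push_cast
    exact le_trans (IsUltrametricDist.norm_add_le_max _ _) (max_le ha hb)
  neg_mem' := by
    intro a ha
    simpa using ha

/-- The maximal ideal `m_E = {x ∈ E : |x| < 1}` of the valuation ring of `E`. -/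
def maxIdeal (E : Subfield C) : Ideal (integers C E) where
  carrier := {x | ‖((x : E) : C)‖ < 1}
  zero_mem' := by simp
  add_mem' := by
    intro a b ha hb
    simp only [Set.mem_setOf_eq] at *
    push_cast
    exact lt_of_le_of_lt (IsUltrametricDist.norm_add_le_max _ _) (max_lt ha hb)
  smul_mem' := by
    intro c x hx
    simp only [Set.mem_setOf_eq, smul_eq_mul] at *
    push_cast
    rw [norm_mul]
    calc ‖((c : E) : C)‖ * ‖((x : E) : C)‖ ≤ 1 * ‖((x : E) : C)‖ :=
          mul_le_mul_of_nonneg_right c.2 (norm_nonneg _)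
      _ < 1 := by simpa using hx

/-- The residue field `k_E = O_E / m_E` of a subfield `E` of `C`. -/
def residueField (E : Subfield C) : Type _ := (integers C E) ⧸ (maxIdeal C E)

instance (E : Subfield C) : CommRing (residueField C E) := Ideal.Quotient.commRing _

variable {C} in
/-- The map of valuation rings induced by an inclusion of subfields of `C`. -/
def integersMap {E E' : Subfield C} (h : E ≤ E') : integers C E →+* integers C E' :=
  ((Subfield.inclusion h).comp (integers C E).subtype).codRestrict (integers C E')
    (fun x => x.2)

variable {C} in
/-- The map of residue fields induced by an inclusion of subfields of `C`. -/
def residueMap {E E' : Subfield C} (h : E ≤ E') :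
    residueField C E →+* residueField C E' :=
  Ideal.Quotient.lift (maxIdeal C E)
    ((Ideal.Quotient.mk (maxIdeal C E')).comp (integersMap h))
    (fun a ha => by
      show Ideal.Quotient.mk (maxIdeal C E') ((integersMap h) a) = 0
      rw [Ideal.Quotient.eq_zero_iff_mem]
      exact ha)

variable {C} in
/-- The residue class degree `f(E'|E) = [k_{E'} : k_E]`. -/
def resDeg {E E' : Subfield C} (h : E ≤ E') : ℕ :=
  letI := (residueMap h).toAlgebra
  Module.finrank (residueField C E) (residueField C E')


/-- Auxiliary: in an ultrametric normed field, a finite product of elements within `δ ≤ 1`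
of `1` is within `δ` of `1`. -/
theorem aux_prod_sub_one {α : Type*} {F : Type*} [NormedField F] [IsUltrametricDist F]
    {δ : ℝ} (hδ0 : 0 ≤ δ) (hδ1 : δ ≤ 1) (u : Finset α) (g : α → F)
    (h : ∀ μ ∈ u, ‖g μ - 1‖ ≤ δ) : ‖∏ μ ∈ u, g μ - 1‖ ≤ δ := by
  classical
  induction u using Finset.induction with
  | empty => simpa
  | @insert a u ha ih =>
    rw [Finset.prod_insert ha]
    have hP : ‖∏ μ ∈ u, g μ - 1‖ ≤ δ := ih (fun μ hμ => h μ (Finset.mem_insert_of_mem hμ))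
    have hPle : ‖∏ μ ∈ u, g μ‖ ≤ 1 := by
      have he : (∏ μ ∈ u, g μ) = (∏ μ ∈ u, g μ - 1) + 1 := by ring
      rw [he]
      exact le_trans (IsUltrametricDist.norm_add_le_max _ _)
        (max_le (hP.trans hδ1) (by simp))
    have key : g a * ∏ μ ∈ u, g μ - 1
        = (g a - 1) * ∏ μ ∈ u, g μ + (∏ μ ∈ u, g μ - 1) := by ring
    rw [key]
    refine le_trans (IsUltrametricDist.norm_add_le_max _ _) (max_le ?_ hP)
    rw [norm_mul]
    calc ‖g a - 1‖ * ‖∏ μ ∈ u, g μ‖ ≤ δ * 1 :=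
          mul_le_mul (h a (Finset.mem_insert_self a u)) hPle (norm_nonneg _) hδ0
      _ = δ := mul_one δ

/-- Auxiliary key lemma: the norm formula for `e_{Λ'}(λ)`. -/
theorem latticeExp_norm_key
    (r : ℕ) (Λ' : Set C) (hΛ : IsLattice Fq C Λ' r)
    (lam : C) (hlam : lam ∉ Λ')
    (hmax : ∀ μ ∈ Λ', μ ≠ 0 → ‖lam - μ‖ = max ‖lam‖ ‖μ‖) :
    {μ | μ ∈ Λ' ∧ μ ≠ 0 ∧ ‖μ‖ ≤ ‖lam‖}.Finite ∧
    ‖latticeExp C Λ' lam‖ =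
      ‖lam‖ * ∏ᶠ μ ∈ {μ | μ ∈ Λ' ∧ μ ≠ 0 ∧ ‖μ‖ ≤ ‖lam‖}, (‖lam‖ / ‖μ‖) ∧
    latticeExp C Λ' lam ≠ 0 := by
  classical
  have hlam0 : lam ≠ 0 := fun h => hlam (h ▸ hΛ.zero_mem)
  have hlampos : (0 : ℝ) < ‖lam‖ := norm_pos_iff.mpr hlam0
  set ι := {x : C // x ∈ Λ' ∧ x ≠ 0} with hι
  set f : ι → C := fun μ => 1 - lam / (μ : C) with hf
  -- finiteness of bounded sets of lattice points
  have hfin : ∀ B : ℝ, {μ : ι | ‖(μ : C)‖ ≤ B}.Finite := by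
    intro B
    have h1 : (Subtype.val ⁻¹' {x : C | x ∈ Λ' ∧ ‖x‖ ≤ B} : Set ι).Finite :=
      Set.Finite.preimage Subtype.val_injective.injOn (hΛ.discrete B)
    exact h1.subset (fun μ hμ => ⟨μ.2.1, hμ⟩)
  -- norm of each factor
  have hfnorm : ∀ μ : ι, ‖f μ‖ = max ‖lam‖ ‖(μ : C)‖ / ‖(μ : C)‖ := by
    intro μ
    have hμ0 : (μ : C) ≠ 0 := μ.2.2
    have : f μ = ((μ : C) - lam) / (μ : C) := by
      field_simp [hf]
      simp only [hf]
      rw [sub_mul, div_mul_cancel₀ _ hμ0, one_mul]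
    rw [this, norm_div, norm_sub_rev, hmax _ μ.2.1 hμ0]
  have hμpos : ∀ μ : ι, (0 : ℝ) < ‖(μ : C)‖ := fun μ => norm_pos_iff.mpr μ.2.2
  have hfpos : ∀ μ : ι, (0 : ℝ) < ‖f μ‖ := by
    intro μ
    rw [hfnorm μ]
    exact div_pos (lt_of_lt_of_le (hμpos μ) (le_max_right _ _)) (hμpos μ)
  set s₁ : Finset ι := (hfin ‖lam‖).toFinset with hs₁
  have hs₁mem : ∀ μ : ι, μ ∈ s₁ ↔ ‖(μ : C)‖ ≤ ‖lam‖ := by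
    intro μ; rw [hs₁, Set.Finite.mem_toFinset]; rfl
  have hf1 : ∀ μ : ι, μ ∉ s₁ → ‖f μ‖ = 1 := by
    intro μ hμ
    rw [hfnorm μ, max_eq_right (le_of_not_ge (fun h => hμ ((hs₁mem μ).mpr h))),
      div_self (ne_of_gt (hμpos μ))]
  set c : ℝ := ∏ μ ∈ s₁, ‖f μ‖ with hc
  have hcpos : (0 : ℝ) < c := Finset.prod_pos (fun μ _ => hfpos μ)
  have hPs : ∀ s : Finset ι, s₁ ⊆ s → ‖∏ μ ∈ s, f μ‖ = c := by
    intro s hs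
    rw [norm_prod]
    exact (Finset.prod_subset hs (fun μ _ hμ => hf1 μ hμ)).symm
  -- the Cauchy property of the partial products
  have hcauchy : CauchySeq (fun s : Finset ι => ∏ μ ∈ s, f μ) := by
    rw [Metric.cauchySeq_iff]
    intro ε hε
    set M : ℝ := max c 1 with hM
    have hMpos : (0 : ℝ) < M := lt_of_lt_of_le one_pos (le_max_right _ _)
    set δ : ℝ := min 1 (ε / (2 * M)) with hδ
    have hδpos : (0 : ℝ) < δ :=
      lt_min one_pos (div_pos hε (by positivity))
    set s₂ : Finset ι := (hfin (‖lam‖ / δ)).toFinset with hs₂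
    set s₀ : Finset ι := s₁ ∪ s₂ with hs₀
    -- difference estimate
    have hdiff : ∀ s t : Finset ι, s₀ ⊆ s → s ⊆ t →
        ‖∏ μ ∈ t, f μ - ∏ μ ∈ s, f μ‖ ≤ c * δ := by
      intro s t hs hst
      have hsplit : (∏ μ ∈ t, f μ) = (∏ μ ∈ s, f μ) * ∏ μ ∈ t \ s, f μ := by
        rw [← Finset.prod_union (Finset.disjoint_sdiff)]
        exact Finset.prod_congr (by rw [Finset.union_sdiff_of_subset hst]) (fun _ _ => rfl)
      have hsmall : ∀ μ ∈ t \ s, ‖f μ - 1‖ ≤ δ := by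
        intro μ hμ
        have hμs₂ : μ ∉ s₂ := fun h =>
          (Finset.mem_sdiff.mp hμ).2 (hs (Finset.mem_union_right _ h))
        have hμbig : ‖lam‖ / δ < ‖(μ : C)‖ := by
          by_contra h
          exact hμs₂ ((Set.Finite.mem_toFinset _).mpr (le_of_not_gt h))
        have : ‖f μ - 1‖ = ‖lam‖ / ‖(μ : C)‖ := by
          rw [hf]
          simp only [sub_sub_cancel_left, norm_neg, norm_div]
        rw [this]
        rw [div_le_iff₀ (hμpos μ)]
        calc ‖lam‖ = (‖lam‖ / δ) * δ := by field_simp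
          _ ≤ ‖(μ : C)‖ * δ := by
              exact mul_le_mul_of_nonneg_right (le_of_lt hμbig) (le_of_lt hδpos)
          _ = δ * ‖(μ : C)‖ := mul_comm _ _
      have hprod : ‖∏ μ ∈ t \ s, f μ - 1‖ ≤ δ :=
        aux_prod_sub_one (le_of_lt hδpos) (min_le_left _ _) _ _ hsmall
      calc ‖∏ μ ∈ t, f μ - ∏ μ ∈ s, f μ‖
          = ‖∏ μ ∈ s, f μ‖ * ‖∏ μ ∈ t \ s, f μ - 1‖ := by
            rw [hsplit, ← norm_mul]; congr 1; ring
        _ ≤ c * δ := by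
            rw [hPs s (le_trans (Finset.subset_union_left) hs)]
            exact mul_le_mul_of_nonneg_left hprod (le_of_lt hcpos)
    refine ⟨s₀, fun m hm n hn => ?_⟩
    have hδM : c * δ < ε := by
      have h1 : c * δ ≤ M * (ε / (2 * M)) :=
        mul_le_mul (le_max_left _ _) (min_le_right _ _) (le_of_lt hδpos) (le_of_lt hMpos)
      have h2 : M * (ε / (2 * M)) = ε / 2 := by field_simp
      have : c * δ ≤ ε / 2 := h1.trans (le_of_eq h2)
      linarith
    rw [dist_eq_norm]
    have h1 : ‖∏ μ ∈ m, f μ - ∏ μ ∈ m ∪ n, f μ‖ ≤ c * δ := by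
      rw [norm_sub_rev]
      exact hdiff m (m ∪ n) hm (Finset.subset_union_left)
    have h2 : ‖∏ μ ∈ m ∪ n, f μ - ∏ μ ∈ n, f μ‖ ≤ c * δ :=
      hdiff n (m ∪ n) hn (Finset.subset_union_right)
    calc ‖∏ μ ∈ m, f μ - ∏ μ ∈ n, f μ‖
        = ‖(∏ μ ∈ m, f μ - ∏ μ ∈ m ∪ n, f μ) + (∏ μ ∈ m ∪ n, f μ - ∏ μ ∈ n, f μ)‖ := by
          congr 1; ring
      _ ≤ max ‖∏ μ ∈ m, f μ - ∏ μ ∈ m ∪ n, f μ‖ ‖∏ μ ∈ m ∪ n, f μ - ∏ μ ∈ n, f μ‖ :=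
          IsUltrametricDist.norm_add_le_max _ _
      _ ≤ c * δ := max_le h1 h2
      _ < ε := hδM
  obtain ⟨a, ha⟩ := cauchySeq_tendsto_of_complete hcauchy
  have hHasProd : HasProd f a := ha
  have htprod : (∏' μ : ι, f μ) = a := hHasProd.tprod_eq
  -- the norm of the limit
  have hnorm_a : ‖a‖ = c := by
    have h1 : Filter.Tendsto (fun s : Finset ι => ‖∏ μ ∈ s, f μ‖) Filter.atTop (nhds ‖a‖) :=
      ha.norm
    have h2 : Filter.Tendsto (fun s : Finset ι => ‖∏ μ ∈ s, f μ‖) Filter.atTop (nhds c) := by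
      refine Filter.Tendsto.congr' ?_ tendsto_const_nhds
      filter_upwards [Filter.eventually_ge_atTop s₁] with s hs
      exact (hPs s hs).symm
    exact tendsto_nhds_unique h1 h2
  -- finiteness of the set in the statement
  have hS : {μ | μ ∈ Λ' ∧ μ ≠ 0 ∧ ‖μ‖ ≤ ‖lam‖}.Finite :=
    (hΛ.discrete ‖lam‖).subset (fun μ hμ => ⟨hμ.1, hμ.2.2⟩)
  -- the finprod equals c
  have hfinprod : ∏ᶠ μ ∈ {μ | μ ∈ Λ' ∧ μ ≠ 0 ∧ ‖μ‖ ≤ ‖lam‖}, (‖lam‖ / ‖μ‖) = c := by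
    rw [← hS.coe_toFinset, finprod_mem_coe_finset, hc]
    refine Finset.prod_bij (fun (μ : C) (hμ : μ ∈ hS.toFinset) =>
      (⟨μ, by
        have := (Set.Finite.mem_toFinset hS).mp hμ
        exact ⟨this.1, this.2.1⟩⟩ : ι)) ?_ ?_ ?_ ?_
    · intro μ hμ
      have := (Set.Finite.mem_toFinset hS).mp hμ
      exact (hs₁mem _).mpr this.2.2
    · intro μ₁ h₁ μ₂ h₂ h
      exact congrArg Subtype.val h
    · intro ν hν
      refine ⟨(ν : C), (Set.Finite.mem_toFinset hS).mpr ⟨ν.2.1, ν.2.2, (hs₁mem ν).mp hν⟩, rfl⟩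
    · intro μ hμ
      have hμmem := (Set.Finite.mem_toFinset hS).mp hμ
      have := hfnorm ⟨μ, hμmem.1, hμmem.2.1⟩
      rw [this]
      simp only
      rw [max_eq_left hμmem.2.2]
  -- the exponential value
  have hexp : latticeExp C Λ' lam = lam * a := by
    rw [latticeExp, htprod]
  have hnorm_exp : ‖latticeExp C Λ' lam‖ = ‖lam‖ * c := by
    rw [hexp, norm_mul, hnorm_a]
  refine ⟨hS, ?_, ?_⟩
  · rw [hnorm_exp, hfinprod]
  · rw [← norm_ne_zero_iff, hnorm_exp]
    exact ne_of_gt (mul_pos hlampos hcpos)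

/-- If `Λ'` is an `A`-lattice of finite rank in `C` and `λ ∈ C ∖ Λ'`
satisfies `|λ − μ| = max(|λ|, |μ|)` for all nonzero `μ ∈ Λ'`, then
`|e_{Λ'}(λ)| = |λ| · ∏_{0 ≠ μ ∈ Λ', |μ| ≤ |λ|} |λ|/|μ|`, a finite product. In particular
`e_{Λ'}(λ) ≠ 0` and `|e_{Λ'}(λ)|` depends only on `|λ|`. -/
theorem latticeExp_norm_formula
    (hnorm : NormExtends Fq C)
    (r : ℕ) (Λ' : Set C) (hΛ : IsLattice Fq C Λ' r)
    (lam : C) (hlam : lam ∉ Λ')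
    (hmax : ∀ μ ∈ Λ', μ ≠ 0 → ‖lam - μ‖ = max ‖lam‖ ‖μ‖) :
    {μ | μ ∈ Λ' ∧ μ ≠ 0 ∧ ‖μ‖ ≤ ‖lam‖}.Finite ∧
    ‖latticeExp C Λ' lam‖ =
      ‖lam‖ * ∏ᶠ μ ∈ {μ | μ ∈ Λ' ∧ μ ≠ 0 ∧ ‖μ‖ ≤ ‖lam‖}, (‖lam‖ / ‖μ‖) ∧
    latticeExp C Λ' lam ≠ 0 ∧
    (∀ lam' : C, lam' ∉ Λ' → (∀ μ ∈ Λ', μ ≠ 0 → ‖lam' - μ‖ = max ‖lam'‖ ‖μ‖) →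
      ‖lam'‖ = ‖lam‖ → ‖latticeExp C Λ' lam'‖ = ‖latticeExp C Λ' lam‖) := by
  obtain ⟨h1, h2, h3⟩ := latticeExp_norm_key Fq C r Λ' hΛ lam hlam hmax
  refine ⟨h1, h2, h3, fun lam' hlam' hmax' hnn => ?_⟩
  obtain ⟨h1', h2', _⟩ := latticeExp_norm_key Fq C r Λ' hΛ lam' hlam' hmax'
  rw [hnn] at h2'
  rw [h2', h2]

end DrinfeldPeriods
end
end

section
/- Let Λ be an A-lattice of rank r in C and let λ_1, …, λ_r be chosen successively so that for each i, λ_i has minimal absolute value among the elements of Λ ∖ (Aλ_1 + ⋯ + Aλ_{i−1}). Then λ_1, …, λ_r is an A-basis of Λ, and it is orthogonal: for all a_1, …, a_r ∈ K∞, |a_1λ_1 + ⋯ + a_rλ_r| = max_{1≤i≤r} |a_i|·|λ_i|. -/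
open Polynomial

set_option linter.unusedSectionVars false
set_option synthInstance.maxHeartbeats 400000
set_option maxHeartbeats 1000000

noncomputable section

namespace DrinfeldPeriods

/-! ## The basic setting

`Fq` is the finite field with `q` elements, `Kinf Fq = F_q((T⁻¹))` is the field of formal
Laurent series in `T⁻¹` (realized as Laurent series in a variable `X` with `T := X⁻¹`),
and `C` is a complete algebraically closed nonarchimedean normed field whose norm extends
the absolute value of `K∞` normalized by `|T| = q`.  (The completed algebraic closure of
`K∞` is such a field.) -/

variable (Fq : Type*) [Field Fq] [Fintype Fq]

variable (C : Type*) [NormedField C] [IsUltrametricDist C] [CompleteSpace C] [IsAlgClosed C]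
  [Algebra (Kinf Fq) C]

/-! ### Auxiliary lemmas for Statement 17 -/

open scoped NNReal

theorem one_lt_qnn : (1 : ℝ≥0) < (Fintype.card Fq : ℝ≥0) := by
  exact_mod_cast Fintype.one_lt_card

theorem qnn_pos : (0 : ℝ≥0) < (Fintype.card Fq : ℝ≥0) :=
  lt_trans zero_lt_one (one_lt_qnn Fq)

theorem Tinf_ne_zero : Tinf Fq ≠ 0 := HahnSeries.single_ne_zero one_ne_zero

theorem Tinf_pow (k : ℕ) :
    (Tinf Fq) ^ k = HahnSeries.single (-(k : ℤ)) (1 : Fq) := by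
  rw [Tinf, HahnSeries.single_pow]
  simp

theorem nnnorm_alg (hnorm : NormExtends Fq C) {x : Kinf Fq} (hx : x ≠ 0) :
    ‖algebraMap (Kinf Fq) C x‖₊ = (Fintype.card Fq : ℝ≥0) ^ (-x.order) := by
  have h := hnorm x hx
  apply NNReal.coe_injective
  rw [coe_nnnorm, h, NNReal.coe_zpow]
  norm_num

theorem nnnorm_TC (hnorm : NormExtends Fq C) :
    ‖TC Fq C‖₊ = (Fintype.card Fq : ℝ≥0) := by
  rw [TC, nnnorm_alg Fq C hnorm (Tinf_ne_zero Fq)]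
  rw [Tinf, HahnSeries.order_single one_ne_zero]
  norm_num

theorem nnnorm_FqC (hnorm : NormExtends Fq C) {c : Fq} (hc : c ≠ 0) :
    ‖FqC Fq C c‖₊ = 1 := by
  have hC : (HahnSeries.C c : Kinf Fq) ≠ 0 := by
    simpa using (HahnSeries.C_ne_zero hc : (HahnSeries.C c : Kinf Fq) ≠ 0)
  have : FqC Fq C c = algebraMap (Kinf Fq) C (HahnSeries.C c) := rfl
  rw [this, nnnorm_alg Fq C hnorm hC, HahnSeries.order_C]
  norm_num

theorem nnnorm_FqC_le (hnorm : NormExtends Fq C) (c : Fq) :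
    ‖FqC Fq C c‖₊ ≤ 1 := by
  by_cases hc : c = 0
  · simp [hc]
  · exact le_of_eq (nnnorm_FqC Fq C hnorm hc)

theorem nnnorm_Amap_le_aux (hnorm : NormExtends Fq C) (n : ℕ) :
    ∀ a : Polynomial Fq, a.natDegree ≤ n →
      ‖Amap Fq C a‖₊ ≤ (Fintype.card Fq : ℝ≥0) ^ n := by
  induction n with
  | zero =>
    intro a ha
    rw [Polynomial.eq_C_of_natDegree_le_zero ha]
    simpa [Amap] using nnnorm_FqC_le Fq C hnorm (a.coeff 0)
  | succ n ih =>
    intro a ha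
    have hd : (a.divX).natDegree ≤ n := by
      by_cases h0 : a.divX = 0
      · simp [h0]
      · have h1 := Polynomial.natDegree_divX_eq_natDegree_tsub_one (p := a)
        have h2 : a.natDegree ≠ 0 := by
          intro hz
          exact h0 (Polynomial.divX_eq_zero_iff.mpr (Polynomial.eq_C_of_natDegree_eq_zero hz))
        omega
    have key : Amap Fq C a = Amap Fq C a.divX * TC Fq C + FqC Fq C (a.coeff 0) := by
      conv_lhs => rw [← Polynomial.divX_mul_X_add a]
      simp [Amap]
    rw [key]
    refine le_trans (IsUltrametricDist.nnnorm_add_le_max _ _) (max_le ?_ ?_)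
    · rw [nnnorm_mul, nnnorm_TC Fq C hnorm, pow_succ]
      exact mul_le_mul_left (ih a.divX hd) _
    · exact le_trans (nnnorm_FqC_le Fq C hnorm _) (one_le_pow_of_one_le' (le_of_lt (one_lt_qnn Fq)) _)

theorem nnnorm_Amap_le (hnorm : NormExtends Fq C) (a : Polynomial Fq) :
    ‖Amap Fq C a‖₊ ≤ (Fintype.card Fq : ℝ≥0) ^ a.natDegree :=
  nnnorm_Amap_le_aux Fq C hnorm a.natDegree a le_rfl

theorem nnnorm_Amap (hnorm : NormExtends Fq C) :
    ∀ a : Polynomial Fq, a ≠ 0 →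
      ‖Amap Fq C a‖₊ = (Fintype.card Fq : ℝ≥0) ^ a.natDegree := by
  suffices h : ∀ (n : ℕ) (a : Polynomial Fq), a ≠ 0 → a.natDegree = n →
      ‖Amap Fq C a‖₊ = (Fintype.card Fq : ℝ≥0) ^ a.natDegree by
    intro a ha; exact h a.natDegree a ha rfl
  intro n
  induction n with
  | zero =>
    intro a ha hdeg
    obtain ⟨c, rfl⟩ := Polynomial.natDegree_eq_zero.mp hdeg
    have hc : c ≠ 0 := fun h => ha (by simp [h])
    simp only [Polynomial.natDegree_C, pow_zero]
    simpa [Amap] using nnnorm_FqC Fq C hnorm hc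
  | succ n ih =>
    intro a ha hdeg
    have hdvx : a.divX ≠ 0 := by
      intro h0
      have := Polynomial.divX_eq_zero_iff.mp h0
      rw [this] at hdeg
      simp at hdeg
    have hdn : a.divX.natDegree = n := by
      have := Polynomial.natDegree_divX_eq_natDegree_tsub_one (p := a)
      omega
    have key : Amap Fq C a = Amap Fq C a.divX * TC Fq C + FqC Fq C (a.coeff 0) := by
      conv_lhs => rw [← Polynomial.divX_mul_X_add a]
      simp [Amap]
    have h1 : ‖Amap Fq C a.divX * TC Fq C‖₊ = (Fintype.card Fq : ℝ≥0) ^ (n + 1) := by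
      rw [nnnorm_mul, nnnorm_TC Fq C hnorm, ih a.divX hdvx hdn, hdn, pow_succ]
    have h2 : ‖FqC Fq C (a.coeff 0)‖₊ < ‖Amap Fq C a.divX * TC Fq C‖₊ := by
      rw [h1]
      exact lt_of_le_of_lt (nnnorm_FqC_le Fq C hnorm _)
        (one_lt_pow₀ (one_lt_qnn Fq) (Nat.succ_ne_zero n))
    rw [key, hdeg,
      IsUltrametricDist.nnnorm_add_eq_max_of_nnnorm_ne_nnnorm (ne_of_gt h2),
      max_eq_left (le_of_lt h2), h1]


/-! ### spanBelow and lattice lemmas -/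

theorem mem_spanBelow_zero {r : ℕ} (lam : Fin r → C) (i : Fin r) :
    (0 : C) ∈ spanBelow Fq C lam i :=
  ⟨0, by simp⟩

theorem spanBelow_add {r : ℕ} {lam : Fin r → C} {i : Fin r} {x y : C}
    (hx : x ∈ spanBelow Fq C lam i) (hy : y ∈ spanBelow Fq C lam i) :
    x + y ∈ spanBelow Fq C lam i := by
  obtain ⟨a, rfl⟩ := hx; obtain ⟨b, rfl⟩ := hy
  exact ⟨a + b, by simp [Finset.sum_add_distrib, add_mul]⟩

theorem spanBelow_sub {r : ℕ} {lam : Fin r → C} {i : Fin r} {x y : C}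
    (hx : x ∈ spanBelow Fq C lam i) (hy : y ∈ spanBelow Fq C lam i) :
    x - y ∈ spanBelow Fq C lam i := by
  obtain ⟨a, rfl⟩ := hx; obtain ⟨b, rfl⟩ := hy
  exact ⟨a - b, by simp [Finset.sum_sub_distrib, sub_mul]⟩

theorem spanBelow_smul {r : ℕ} {lam : Fin r → C} {i : Fin r} (b : Polynomial Fq) {x : C}
    (hx : x ∈ spanBelow Fq C lam i) :
    Amap Fq C b * x ∈ spanBelow Fq C lam i := by
  obtain ⟨a, rfl⟩ := hx
  exact ⟨fun j => b * a j, by simp [Finset.mul_sum, map_mul, mul_assoc]⟩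

theorem mem_spanBelow_single {r : ℕ} {lam : Fin r → C} {i j : Fin r} (hj : j < i)
    (bp : Polynomial Fq) : Amap Fq C bp * lam j ∈ spanBelow Fq C lam i := by
  refine ⟨fun k => if k = j then bp else 0, ?_⟩
  have hmem : j ∈ Finset.univ.filter (fun k => k < i) :=
    Finset.mem_filter.mpr ⟨Finset.mem_univ j, hj⟩
  rw [Finset.sum_eq_single_of_mem j hmem (fun k _ hkj => by simp [hkj])]
  simp

theorem spanBelow_sum {r : ℕ} {lam : Fin r → C} {i : Fin r} {ι : Type*} (s : Finset ι)
    (f : ι → C) (hf : ∀ j ∈ s, f j ∈ spanBelow Fq C lam i) :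
    (∑ j ∈ s, f j) ∈ spanBelow Fq C lam i := by
  classical
  induction s using Finset.induction_on with
  | empty => simpa using mem_spanBelow_zero Fq C lam i
  | insert _ _ hns ih =>
    rw [Finset.sum_insert hns]
    exact spanBelow_add Fq C (hf _ (Finset.mem_insert_self _ _))
      (ih fun j hj => hf j (Finset.mem_insert_of_mem hj))

theorem spanBelow_mono {r : ℕ} {lam : Fin r → C} {i i' : Fin r} (h : i ≤ i') :
    spanBelow Fq C lam i ⊆ spanBelow Fq C lam i' := by
  rintro x ⟨a, rfl⟩
  refine ⟨fun k => if k < i then a k else 0, ?_⟩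
  have hsub : Finset.univ.filter (fun j => j < i) ⊆ Finset.univ.filter (fun j => j < i') :=
    fun k hk => by
      simp only [Finset.mem_filter, Finset.mem_univ, true_and] at *
      exact lt_of_lt_of_le hk h
  calc ∑ j ∈ Finset.univ.filter (fun j => j < i), Amap Fq C (a j) * lam j
      = ∑ j ∈ Finset.univ.filter (fun j => j < i),
          Amap Fq C (if j < i then a j else 0) * lam j :=
        Finset.sum_congr rfl (fun k hk => by
          rw [if_pos (Finset.mem_filter.mp hk).2])
    _ = ∑ j ∈ Finset.univ.filter (fun j => j < i'),
          Amap Fq C (if j < i then a j else 0) * lam j := by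
        refine Finset.sum_subset hsub (fun k _ hk => ?_)
        have : ¬ k < i := fun hlt =>
          hk (Finset.mem_filter.mpr ⟨Finset.mem_univ k, hlt⟩)
        rw [if_neg this, map_zero, zero_mul]

theorem lam_ne_zero {r : ℕ} {Λ : Set C} {lam : Fin r → C} (hlam : IsSMB Fq C Λ lam)
    (i : Fin r) : lam i ≠ 0 :=
  fun h => (hlam i).2.1 (h ▸ mem_spanBelow_zero Fq C lam i)

theorem nnnorm_lam_pos {r : ℕ} {Λ : Set C} {lam : Fin r → C} (hlam : IsSMB Fq C Λ lam)
    (i : Fin r) : 0 < ‖lam i‖₊ := by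
  simpa [pos_iff_ne_zero] using (nnnorm_ne_zero_iff).mpr (lam_ne_zero Fq C hlam i)

theorem nnnorm_lam_mono {r : ℕ} {Λ : Set C} {lam : Fin r → C} (hlam : IsSMB Fq C Λ lam)
    {i j : Fin r} (hij : i ≤ j) : ‖lam i‖₊ ≤ ‖lam j‖₊ := by
  have h1 : lam j ∉ spanBelow Fq C lam i :=
    fun h => (hlam j).2.1 (spanBelow_mono Fq C hij h)
  have := (hlam i).2.2 (lam j) (hlam j).1 h1
  exact this

theorem lattice_sum_mem {r : ℕ} {Λ : Set C} (hΛ : IsLattice Fq C Λ r) {ι : Type*}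
    (s : Finset ι) (f : ι → C) (hf : ∀ j ∈ s, f j ∈ Λ) : (∑ j ∈ s, f j) ∈ Λ := by
  classical
  induction s using Finset.induction_on with
  | empty => simpa using hΛ.zero_mem
  | insert _ _ hns ih =>
    rw [Finset.sum_insert hns]
    exact hΛ.add_mem _ (hf _ (Finset.mem_insert_self _ _)) _
      (ih fun j hj => hf j (Finset.mem_insert_of_mem hj))

theorem lattice_neg_mem {r : ℕ} {Λ : Set C} (hΛ : IsLattice Fq C Λ r) {x : C}
    (hx : x ∈ Λ) : -x ∈ Λ := by
  have := hΛ.smul_mem (-1) x hx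
  simpa using this

theorem lattice_sub_mem {r : ℕ} {Λ : Set C} (hΛ : IsLattice Fq C Λ r) {x y : C}
    (hx : x ∈ Λ) (hy : y ∈ Λ) : x - y ∈ Λ := by
  rw [sub_eq_add_neg]
  exact hΛ.add_mem _ hx _ (lattice_neg_mem Fq C hΛ hy)

/-! ### Orthogonality for polynomial coefficients -/

theorem orthA {r : ℕ} {Λ : Set C} (hnorm : NormExtends Fq C) (hΛ : IsLattice Fq C Λ r)
    {lam : Fin r → C} (hlam : IsSMB Fq C Λ lam) (a : Fin r → Polynomial Fq) :
    ‖∑ i, Amap Fq C (a i) * lam i‖₊ =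
      Finset.univ.sup fun i => ‖Amap Fq C (a i)‖₊ * ‖lam i‖₊ := by
  classical
  set q : ℝ≥0 := (Fintype.card Fq : ℝ≥0) with hqdef
  have hq1 : 1 < q := one_lt_qnn Fq
  set M := Finset.univ.sup (fun i => ‖Amap Fq C (a i)‖₊ * ‖lam i‖₊) with hMdef
  have hle : ‖∑ i, Amap Fq C (a i) * lam i‖₊ ≤ M := by
    refine le_trans (Finset.nnnorm_sum_le_sup_nnnorm _ _) ?_
    exact Finset.sup_mono_fun (fun i _ => le_of_eq (nnnorm_mul _ _))
  rcases eq_or_lt_of_le hle with h | hlt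
  · exact h
  exfalso
  have hM0 : 0 < M := lt_of_le_of_lt zero_le hlt
  set I : Finset (Fin r) :=
    Finset.univ.filter (fun j => ‖Amap Fq C (a j)‖₊ * ‖lam j‖₊ = M) with hIdef
  have hInonempty : I.Nonempty := by
    have huniv : (Finset.univ : Finset (Fin r)).Nonempty := by
      by_contra h
      rw [Finset.not_nonempty_iff_eq_empty] at h
      rw [hMdef, h, Finset.sup_empty] at hM0
      exact lt_irrefl _ hM0
    obtain ⟨j, hj, hjM⟩ := Finset.exists_mem_eq_sup Finset.univ huniv
      (fun i => ‖Amap Fq C (a i)‖₊ * ‖lam i‖₊)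
    exact ⟨j, Finset.mem_filter.mpr ⟨hj, hjM.symm⟩⟩
  set i := I.max' hInonempty with hidef
  have hiI : i ∈ I := I.max'_mem hInonempty
  have hiM : ‖Amap Fq C (a i)‖₊ * ‖lam i‖₊ = M := (Finset.mem_filter.mp hiI).2
  have haIne : ∀ j ∈ I, a j ≠ 0 := by
    intro j hj h0
    have hjM := (Finset.mem_filter.mp hj).2
    rw [h0] at hjM
    simp only [map_zero, nnnorm_zero, zero_mul] at hjM
    rw [← hjM] at hM0
    exact lt_irrefl _ hM0
  have hai : a i ≠ 0 := haIne i hiI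
  have hnormAm : ∀ j ∈ I, ‖Amap Fq C (a j)‖₊ = q ^ (a j).natDegree :=
    fun j hj => nnnorm_Amap Fq C hnorm _ (haIne j hj)
  have hlampos : ∀ j : Fin r, 0 < ‖lam j‖₊ := nnnorm_lam_pos Fq C hlam
  have hdle : ∀ j ∈ I, (a i).natDegree ≤ (a j).natDegree := by
    intro j hj
    have hji : j ≤ i := I.le_max' j hj
    have hlamle : ‖lam j‖₊ ≤ ‖lam i‖₊ := nnnorm_lam_mono Fq C hlam hji
    have hMeq : q ^ (a j).natDegree * ‖lam j‖₊ = q ^ (a i).natDegree * ‖lam i‖₊ := by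
      rw [← hnormAm j hj, ← hnormAm i hiI, (Finset.mem_filter.mp hj).2, hiM]
    have h1 : q ^ (a i).natDegree * ‖lam i‖₊ ≤ q ^ (a j).natDegree * ‖lam i‖₊ := by
      rw [← hMeq]
      exact mul_le_mul_right hlamle _
    have h2 : q ^ (a i).natDegree ≤ q ^ (a j).natDegree :=
      le_of_mul_le_mul_right h1 (hlampos i)
    exact (pow_le_pow_iff_right₀ hq1).mp h2
  set d := (a i).natDegree with hddef
  set w := ∑ j ∈ I,
    Amap Fq C (Polynomial.C (a j).leadingCoeff * Polynomial.X ^ ((a j).natDegree - d)) * lam j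
    with hwdef
  have hwΛ : w ∈ Λ :=
    lattice_sum_mem Fq C hΛ _ _ (fun j _ => hΛ.smul_mem _ _ (hlam j).1)
  -- w not in spanBelow i
  have hrest : (∑ j ∈ I.erase i,
      Amap Fq C (Polynomial.C (a j).leadingCoeff * Polynomial.X ^ ((a j).natDegree - d)) * lam j)
      ∈ spanBelow Fq C lam i := by
    refine spanBelow_sum Fq C _ _ (fun j hj => ?_)
    have hji : j < i := lt_of_le_of_ne (I.le_max' j (Finset.mem_of_mem_erase hj))
      (Finset.ne_of_mem_erase hj)
    exact mem_spanBelow_single Fq C hji _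
  have hwsplit : w = Amap Fq C (Polynomial.C (a i).leadingCoeff) * lam i +
      ∑ j ∈ I.erase i,
        Amap Fq C (Polynomial.C (a j).leadingCoeff * Polynomial.X ^ ((a j).natDegree - d)) * lam j := by
    rw [hwdef, ← Finset.add_sum_erase _ _ hiI]
    congr 2
    rw [← hddef, Nat.sub_self, pow_zero, mul_one]
  have hwnot : w ∉ spanBelow Fq C lam i := by
    intro hmem
    have h1 : Amap Fq C (Polynomial.C (a i).leadingCoeff) * lam i ∈ spanBelow Fq C lam i := by
      have := spanBelow_sub Fq C hmem hrest
      rw [hwsplit] at this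
      simpa using this
    have h3 := spanBelow_smul Fq C (Polynomial.C (a i).leadingCoeff⁻¹) h1
    rw [← mul_assoc, ← map_mul, ← Polynomial.C_mul,
      inv_mul_cancel₀ (Polynomial.leadingCoeff_ne_zero.mpr hai), Polynomial.C_1, map_one,
      one_mul] at h3
    exact (hlam i).2.1 h3
  -- norm of w
  set z := Amap Fq C (Polynomial.X ^ d) * w with hzdef
  have hzsum : z = ∑ j ∈ I,
      Amap Fq C (Polynomial.C (a j).leadingCoeff * Polynomial.X ^ (a j).natDegree) * lam j := by
    rw [hzdef, hwdef, Finset.mul_sum]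
    refine Finset.sum_congr rfl (fun j hj => ?_)
    rw [← mul_assoc, ← map_mul]
    congr 2
    rw [mul_left_comm, ← pow_add, Nat.add_sub_cancel' (hdle j hj)]
  have hsplit : (∑ j, Amap Fq C (a j) * lam j) =
      z + ((∑ j ∈ I, Amap Fq C ((a j).eraseLead) * lam j) +
        ∑ j ∈ Finset.univ \ I, Amap Fq C (a j) * lam j) := by
    have h0 : ∀ j ∈ I, Amap Fq C (a j) * lam j =
        Amap Fq C (Polynomial.C (a j).leadingCoeff * Polynomial.X ^ (a j).natDegree) * lam j +
          Amap Fq C ((a j).eraseLead) * lam j := by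
      intro j hj
      rw [← add_mul, ← map_add, add_comm, Polynomial.eraseLead_add_C_mul_X_pow]
    calc (∑ j, Amap Fq C (a j) * lam j)
        = (∑ j ∈ Finset.univ \ I, Amap Fq C (a j) * lam j) +
            ∑ j ∈ I, Amap Fq C (a j) * lam j :=
          (Finset.sum_sdiff (Finset.subset_univ I)).symm
      _ = (∑ j ∈ Finset.univ \ I, Amap Fq C (a j) * lam j) +
            (z + ∑ j ∈ I, Amap Fq C ((a j).eraseLead) * lam j) := by
          rw [hzsum, ← Finset.sum_add_distrib]
          congr 1
          exact Finset.sum_congr rfl h0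
      _ = z + ((∑ j ∈ I, Amap Fq C ((a j).eraseLead) * lam j) +
            ∑ j ∈ Finset.univ \ I, Amap Fq C (a j) * lam j) := by ring
  have h1 : ‖∑ j ∈ I, Amap Fq C ((a j).eraseLead) * lam j‖₊ < M := by
    refine lt_of_le_of_lt (Finset.nnnorm_sum_le_sup_nnnorm _ _) ?_
    rw [Finset.sup_lt_iff (by simpa using hM0)]
    intro j hj
    rw [nnnorm_mul]
    by_cases h0 : (a j).eraseLead = 0
    · simpa [h0] using hM0
    · have hdeglt : (a j).eraseLead.natDegree < (a j).natDegree :=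
        Polynomial.natDegree_lt_natDegree h0 (Polynomial.degree_eraseLead_lt (haIne j hj))
      calc ‖Amap Fq C ((a j).eraseLead)‖₊ * ‖lam j‖₊
          ≤ q ^ (a j).eraseLead.natDegree * ‖lam j‖₊ :=
            mul_le_mul_left (nnnorm_Amap_le Fq C hnorm _) _
        _ < q ^ (a j).natDegree * ‖lam j‖₊ :=
            mul_lt_mul_of_pos_right (pow_lt_pow_right₀ hq1 hdeglt) (hlampos j)
        _ = M := by rw [← hnormAm j hj]; exact (Finset.mem_filter.mp hj).2
  have h2 : ‖∑ j ∈ Finset.univ \ I, Amap Fq C (a j) * lam j‖₊ < M := by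
    refine lt_of_le_of_lt (Finset.nnnorm_sum_le_sup_nnnorm _ _) ?_
    rw [Finset.sup_lt_iff (by simpa using hM0)]
    intro j hj
    rw [nnnorm_mul]
    have hjle : ‖Amap Fq C (a j)‖₊ * ‖lam j‖₊ ≤ M := by
      rw [hMdef]
      exact Finset.le_sup (f := fun k => ‖Amap Fq C (a k)‖₊ * ‖lam k‖₊) (Finset.mem_univ j)
    have hjne : ‖Amap Fq C (a j)‖₊ * ‖lam j‖₊ ≠ M := by
      intro heq
      exact (Finset.mem_sdiff.mp hj).2 (Finset.mem_filter.mpr ⟨Finset.mem_univ j, heq⟩)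
    exact lt_of_le_of_ne hjle hjne
  have hzlt : ‖z‖₊ < M := by
    have hz2 : z = (∑ j, Amap Fq C (a j) * lam j) -
        ((∑ j ∈ I, Amap Fq C ((a j).eraseLead) * lam j) +
          ∑ j ∈ Finset.univ \ I, Amap Fq C (a j) * lam j) := by
      rw [hsplit]; ring
    rw [hz2, sub_eq_add_neg]
    refine lt_of_le_of_lt (IsUltrametricDist.nnnorm_add_le_max _ _) (max_lt hlt ?_)
    rw [nnnorm_neg]
    exact lt_of_le_of_lt (IsUltrametricDist.nnnorm_add_le_max _ _) (max_lt h1 h2)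
  have hzw : ‖z‖₊ = q ^ d * ‖w‖₊ := by
    rw [hzdef, nnnorm_mul, nnnorm_Amap Fq C hnorm _ (pow_ne_zero d Polynomial.X_ne_zero),
      Polynomial.natDegree_X_pow]
  have hMeq : M = q ^ d * ‖lam i‖₊ := by rw [← hiM, hnormAm i hiI]
  have hwlt : ‖w‖₊ < ‖lam i‖₊ := by
    rw [hzw, hMeq] at hzlt
    exact lt_of_mul_lt_mul_left hzlt zero_le
  have hmin : ‖lam i‖ ≤ ‖w‖ := (hlam i).2.2 w hwΛ hwnot
  have hmin' : ‖lam i‖₊ ≤ ‖w‖₊ := hmin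
  exact absurd hwlt (not_lt.mpr hmin')


/-! ### The successive minimum basis generates the lattice -/

theorem Amap_ne_zero (hnorm : NormExtends Fq C) {a : Polynomial Fq} (ha : a ≠ 0) :
    Amap Fq C a ≠ 0 := by
  intro h
  have h2 := nnnorm_Amap Fq C hnorm a ha
  rw [h, nnnorm_zero] at h2
  exact absurd h2.symm (ne_of_gt (pow_pos (qnn_pos Fq) _))

theorem indepA {r : ℕ} {Λ : Set C} (hnorm : NormExtends Fq C) (hΛ : IsLattice Fq C Λ r)
    {lam : Fin r → C} (hlam : IsSMB Fq C Λ lam) {a : Fin r → Polynomial Fq}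
    (h : ∑ i, Amap Fq C (a i) * lam i = 0) : ∀ i, a i = 0 := by
  intro i
  by_contra hai
  have horth := orthA Fq C hnorm hΛ hlam a
  rw [h, nnnorm_zero] at horth
  have hterm : ‖Amap Fq C (a i)‖₊ * ‖lam i‖₊ ≤ 0 := by
    rw [horth]
    exact Finset.le_sup (f := fun k => ‖Amap Fq C (a k)‖₊ * ‖lam k‖₊) (Finset.mem_univ i)
  have h0 : ‖Amap Fq C (a i)‖₊ * ‖lam i‖₊ = 0 := le_antisymm hterm zero_le
  rcases mul_eq_zero.mp h0 with h' | h'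
  · exact Amap_ne_zero Fq C hnorm hai (nnnorm_eq_zero.mp h')
  · exact lam_ne_zero Fq C hlam i (nnnorm_eq_zero.mp h')

theorem spanA {r : ℕ} {Λ : Set C} (hnorm : NormExtends Fq C) (hΛ : IsLattice Fq C Λ r)
    {lam : Fin r → C} (hlam : IsSMB Fq C Λ lam) :
    ∀ x ∈ Λ, ∃ aa : Fin r → Polynomial Fq, x = ∑ i, Amap Fq C (aa i) * lam i := by
  classical
  by_contra hcon
  push_neg at hcon
  obtain ⟨x, hxΛ, hxnot⟩ := hcon
  set q : ℝ≥0 := (Fintype.card Fq : ℝ≥0) with hqdef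
  have hq1 : 1 < q := one_lt_qnn Fq
  obtain ⟨b, hbΛ, hbrep⟩ := hΛ.free
  have hcoordex : ∀ y, y ∈ Λ → ∃ cvy : Fin r → Polynomial Fq,
      y = ∑ m, Amap Fq C (cvy m) * b m := fun y hy => (hbrep y hy).exists
  choose cv hcv using hcoordex
  set Y : Fin (r + 1) → C := Fin.cases x lam with hYdef
  have memY : ∀ k, Y k ∈ Λ := by
    intro k
    induction k using Fin.cases with
    | zero => exact hxΛ
    | succ k => exact (hlam k).1
  set cA : Fin (r + 1) → Fin r → Polynomial Fq := fun k => cv (Y k) (memY k) with hcAdef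
  have hcA : ∀ k, Y k = ∑ m, Amap Fq C (cA k m) * b m := fun k => hcv (Y k) (memY k)
  set F := RatFunc Fq with hFdef
  set v : Fin (r + 1) → Fin r → F :=
    fun k m => algebraMap (Polynomial Fq) F (cA k m) with hvdef
  have hnotli : ¬ LinearIndependent F v := by
    intro hli
    have hcard := hli.fintype_card_le_finrank
    rw [Module.finrank_fin_fun, Fintype.card_fin] at hcard
    omega
  obtain ⟨g, hg, k0, hk0⟩ := Fintype.not_linearIndependent_iff.mp hnotli
  obtain ⟨den, hden⟩ :=
    IsLocalization.exist_integer_multiples (nonZeroDivisors (Polynomial Fq)) Finset.univ g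
  choose p hp using fun k => hden k (Finset.mem_univ k)
  have halginj : Function.Injective (algebraMap (Polynomial Fq) F) :=
    IsFractionRing.injective (Polynomial Fq) F
  have hdenne : algebraMap (Polynomial Fq) F (den : Polynomial Fq) ≠ 0 := by
    intro h
    exact nonZeroDivisors.coe_ne_zero den (halginj (by rw [h, map_zero]))
  have hpk0 : p k0 ≠ 0 := by
    intro h0
    apply hk0
    have h1 := hp k0
    rw [h0, map_zero, Algebra.smul_def] at h1
    rcases mul_eq_zero.mp h1.symm with h' | h'
    · exact absurd h' hdenne
    · exact h'
  have hrel : ∀ m, ∑ k, p k * cA k m = 0 := by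
    intro m
    apply halginj
    rw [map_sum, map_zero]
    calc ∑ k, algebraMap (Polynomial Fq) F (p k * cA k m)
        = ∑ k, ((den : Polynomial Fq) • g k) * algebraMap (Polynomial Fq) F (cA k m) := by
          refine Finset.sum_congr rfl fun k _ => ?_
          rw [map_mul, hp k]
      _ = algebraMap (Polynomial Fq) F (den : Polynomial Fq) * ∑ k, g k * v k m := by
          rw [Finset.mul_sum]
          refine Finset.sum_congr rfl fun k _ => ?_
          have hv : v k m = algebraMap (Polynomial Fq) F (cA k m) := rfl
          rw [hv, Algebra.smul_def]
          ring
      _ = 0 := by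
          have hzero : ∑ k, g k * v k m = 0 := by
            have hgm := congrFun hg m
            simpa [Finset.sum_apply, Pi.smul_apply, smul_eq_mul] using hgm
          rw [hzero, mul_zero]
  have hYrel : ∑ k, Amap Fq C (p k) * Y k = 0 := by
    have hterm : ∀ k, Amap Fq C (p k) * Y k = ∑ m, Amap Fq C (p k * cA k m) * b m := by
      intro k
      rw [hcA k, Finset.mul_sum]
      exact Finset.sum_congr rfl fun m _ => by rw [map_mul, mul_assoc]
    rw [Finset.sum_congr rfl fun k _ => hterm k, Finset.sum_comm]
    refine Finset.sum_eq_zero fun m _ => ?_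
    rw [← Finset.sum_mul, ← map_sum, hrel m, map_zero, zero_mul]
  have hxrel : Amap Fq C (p 0) * x + ∑ k : Fin r, Amap Fq C (p k.succ) * lam k = 0 := by
    have := hYrel
    rw [Fin.sum_univ_succ] at this
    simpa [hYdef] using this
  have p0ne : p 0 ≠ 0 := by
    intro h0
    have hz : ∑ k : Fin r, Amap Fq C (p (Fin.succ k)) * lam k = 0 := by
      simpa [h0] using hxrel
    have hall := indepA Fq C hnorm hΛ hlam hz
    apply hpk0
    induction k0 using Fin.cases with
    | zero => exact h0
    | succ k => exact hall k
  set cc : Fin r → Polynomial Fq := fun k => -(p k.succ) with hccdef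
  have hax : Amap Fq C (p 0) * x = ∑ k, Amap Fq C (cc k) * lam k := by
    have h1 := eq_neg_of_add_eq_zero_left hxrel
    rw [h1, ← Finset.sum_neg_distrib]
    exact Finset.sum_congr rfl fun k _ => by rw [hccdef, map_neg, neg_mul]
  set qq : Fin r → Polynomial Fq := fun k => cc k / p 0 with hqqdef
  set ss : Fin r → Polynomial Fq := fun k => cc k % p 0 with hssdef
  have hdm : ∀ k, p 0 * qq k + ss k = cc k := fun k => EuclideanDomain.div_add_mod (cc k) (p 0)
  have hdeg : ∀ k, ss k ≠ 0 → (ss k).natDegree < (p 0).natDegree := by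
    intro k hk
    have hlt : (ss k).degree < (p 0).degree := EuclideanDomain.mod_lt _ p0ne
    exact Polynomial.natDegree_lt_natDegree hk hlt
  set x' : C := x - ∑ k, Amap Fq C (qq k) * lam k with hx'def
  have hx'Λ : x' ∈ Λ :=
    lattice_sub_mem Fq C hΛ hxΛ
      (lattice_sum_mem Fq C hΛ _ _ fun k _ => hΛ.smul_mem _ _ (hlam k).1)
  have hx'rel : Amap Fq C (p 0) * x' = ∑ k, Amap Fq C (ss k) * lam k := by
    calc Amap Fq C (p 0) * x'
        = Amap Fq C (p 0) * x - ∑ k, Amap Fq C (p 0 * qq k) * lam k := by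
          rw [hx'def, mul_sub, Finset.mul_sum]
          congr 1
          exact Finset.sum_congr rfl fun k _ => by rw [map_mul, mul_assoc]
      _ = ∑ k, (Amap Fq C (cc k) - Amap Fq C (p 0 * qq k)) * lam k := by
          rw [hax, ← Finset.sum_sub_distrib]
          exact Finset.sum_congr rfl fun k _ => by rw [sub_mul]
      _ = ∑ k, Amap Fq C (ss k) * lam k := by
          refine Finset.sum_congr rfl fun k _ => ?_
          rw [← map_sub]
          congr 2
          rw [← hdm k]
          ring
  have hx'not : ∀ aa : Fin r → Polynomial Fq, x' ≠ ∑ i, Amap Fq C (aa i) * lam i := by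
    intro aa heq
    apply hxnot (fun i => aa i + qq i)
    have : x = x' + ∑ k, Amap Fq C (qq k) * lam k := by rw [hx'def]; ring
    rw [this, heq, ← Finset.sum_add_distrib]
    exact Finset.sum_congr rfl fun k _ => by rw [map_add, add_mul]
  have hx'ne : x' ≠ 0 := fun h => hx'not 0 (by simp [h])
  have hr : r ≠ 0 := by
    intro hr0
    subst hr0
    obtain ⟨aa, haa, _⟩ := hbrep x hxΛ
    exact hxnot aa (by simpa using haa)
  set itop : Fin r := ⟨r - 1, by omega⟩ with hitopdef
  have hletop : ∀ k : Fin r, k ≤ itop := by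
    intro k
    have := k.2
    rw [Fin.le_def]
    simp only [hitopdef]
    omega
  have hx'span : x' ∉ spanBelow Fq C lam itop := by
    rintro ⟨aa, haa⟩
    apply hx'not (fun j => if j < itop then aa j else 0)
    have hsums : ∑ j, Amap Fq C (if j < itop then aa j else 0) * lam j
        = ∑ j ∈ Finset.univ.filter (fun j => j < itop), Amap Fq C (aa j) * lam j := by
      rw [Finset.sum_filter]
      refine Finset.sum_congr rfl fun j _ => ?_
      split <;> simp
    rw [haa]
    exact hsums.symm
  have hminR : ‖lam itop‖ ≤ ‖x'‖ := (hlam itop).2.2 x' hx'Λ hx'span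
  have hmin : ‖lam itop‖₊ ≤ ‖x'‖₊ := hminR
  have hkey : q ^ (p 0).natDegree * ‖x'‖₊ =
      Finset.univ.sup (fun k => ‖Amap Fq C (ss k)‖₊ * ‖lam k‖₊) := by
    rw [← nnnorm_Amap Fq C hnorm _ p0ne, ← nnnorm_mul, hx'rel,
      orthA Fq C hnorm hΛ hlam ss]
  have hsupb : ∀ k : Fin r, (‖Amap Fq C (ss k)‖₊ * ‖lam k‖₊) * q
      ≤ q ^ (p 0).natDegree * ‖lam itop‖₊ := by
    intro k
    by_cases h0 : ss k = 0
    · simp [h0]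
    · have hdk : (ss k).natDegree + 1 ≤ (p 0).natDegree := hdeg k h0
      calc (‖Amap Fq C (ss k)‖₊ * ‖lam k‖₊) * q
          = (q ^ (ss k).natDegree * q) * ‖lam k‖₊ := by
            rw [nnnorm_Amap Fq C hnorm _ h0]; ring
        _ ≤ q ^ (p 0).natDegree * ‖lam itop‖₊ := by
            refine mul_le_mul ?_ (nnnorm_lam_mono Fq C hlam (hletop k)) zero_le zero_le
            rw [← pow_succ]
            exact pow_le_pow_right₀ (le_of_lt hq1) hdk
  have hq0 : q ≠ 0 := ne_of_gt (qnn_pos Fq)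
  have hstep : (q ^ (p 0).natDegree * ‖x'‖₊) * q ≤ q ^ (p 0).natDegree * ‖lam itop‖₊ := by
    rw [hkey]
    rw [← le_div_iff₀ (pos_iff_ne_zero.mpr hq0)]
    refine Finset.sup_le fun k _ => ?_
    rw [le_div_iff₀ (pos_iff_ne_zero.mpr hq0)]
    exact hsupb k
  have hfin : ‖x'‖₊ * q ≤ ‖lam itop‖₊ := by
    have h1 : q ^ (p 0).natDegree * (‖x'‖₊ * q) ≤ q ^ (p 0).natDegree * ‖lam itop‖₊ := by
      calc q ^ (p 0).natDegree * (‖x'‖₊ * q) = (q ^ (p 0).natDegree * ‖x'‖₊) * q := by ring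
        _ ≤ _ := hstep
    exact le_of_mul_le_mul_left h1 (pow_pos (qnn_pos Fq) _)
  have hcontra : ‖x'‖₊ * q ≤ ‖x'‖₊ := le_trans hfin hmin
  have hx'pos : 0 < ‖x'‖₊ := by
    rw [pos_iff_ne_zero]
    exact nnnorm_ne_zero_iff.mpr hx'ne
  have : q ≤ 1 := by
    rw [mul_comm] at hcontra
    exact (mul_le_iff_le_one_left hx'pos).mp hcontra
  exact absurd hq1 (not_lt.mpr this)


/-! ### Truncation of Laurent series and orthogonality over `K∞` -/

theorem exists_trunc (z : Kinf Fq) :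
    ∃ (P : Polynomial Fq) (y : Kinf Fq),
      z = Polynomial.eval₂ HahnSeries.C (Tinf Fq) P + y ∧ (y = 0 ∨ 1 ≤ y.order) := by
  classical
  by_cases hz : z = 0
  · exact ⟨0, 0, by simp [hz], Or.inl rfl⟩
  set m : ℕ := (-z.order).toNat with hmdef
  have hmz : -(m : ℤ) ≤ z.order := by
    have := Int.self_le_toNat (-z.order)
    omega
  set P : Polynomial Fq :=
    ∑ k ∈ Finset.range (m + 1), Polynomial.C (z.coeff (-(k : ℤ))) * Polynomial.X ^ k with hPdef
  set E : Kinf Fq := Polynomial.eval₂ HahnSeries.C (Tinf Fq) P with hEdef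
  have hEsum : E = ∑ k ∈ Finset.range (m + 1),
      HahnSeries.single (-(k : ℤ)) (z.coeff (-(k : ℤ))) := by
    rw [hEdef, hPdef, Polynomial.eval₂_finset_sum]
    refine Finset.sum_congr rfl fun k _ => ?_
    rw [Polynomial.eval₂_mul, Polynomial.eval₂_C, Polynomial.eval₂_X_pow, Tinf_pow,
      HahnSeries.C_apply, HahnSeries.single_mul_single]
    simp
  have hEco : ∀ j : ℤ, E.coeff j = ∑ k ∈ Finset.range (m + 1),
      (HahnSeries.single (-(k : ℤ)) (z.coeff (-(k : ℤ)))).coeff j := by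
    intro j
    rw [hEsum]
    exact map_sum (HahnSeries.coeff.addMonoidHom j) _ _
  have hEcoeff : ∀ j : ℤ, -(m : ℤ) ≤ j → j ≤ 0 → E.coeff j = z.coeff j := by
    intro j hjm hj0
    rw [hEco j]
    set k0 : ℕ := (-j).toNat with hk0def
    have hk0 : -(k0 : ℤ) = j := by
      have := Int.toNat_of_nonneg (neg_nonneg.mpr hj0)
      omega
    have hk0mem : k0 ∈ Finset.range (m + 1) := by
      rw [Finset.mem_range]
      omega
    rw [Finset.sum_eq_single_of_mem k0 hk0mem (fun k _ hkne => by
      refine HahnSeries.coeff_single_of_ne ?_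
      intro h
      apply hkne
      omega)]
    rw [hk0, HahnSeries.coeff_single_same]
  have hEcoeff0 : ∀ j : ℤ, j < -(m : ℤ) → E.coeff j = 0 := by
    intro j hj
    rw [hEco j]
    refine Finset.sum_eq_zero fun k hk => ?_
    refine HahnSeries.coeff_single_of_ne ?_
    rw [Finset.mem_range] at hk
    omega
  refine ⟨P, z - E, by rw [← hEdef]; ring, ?_⟩
  by_cases hy : z - E = 0
  · exact Or.inl hy
  right
  by_contra hlt
  push_neg at hlt
  have horder : (z - E).order ≤ 0 := by omega
  apply hy
  apply HahnSeries.coeff_order_eq_zero.mp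
  set j := (z - E).order with hjdef
  have hjz : (z - E).coeff j = z.coeff j - E.coeff j := HahnSeries.coeff_sub
  rcases lt_or_ge j (-(m : ℤ)) with h | h
  · rw [hjz, hEcoeff0 j h, sub_zero]
    exact HahnSeries.coeff_eq_zero_of_lt_order (lt_of_lt_of_le h hmz)
  · rw [hjz, hEcoeff j h horder, sub_self]

theorem nnnorm_small (hnorm : NormExtends Fq C) {y : Kinf Fq} (hy : y = 0 ∨ 1 ≤ y.order) :
    ‖algebraMap (Kinf Fq) C y‖₊ ≤ (Fintype.card Fq : ℝ≥0)⁻¹ := by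
  rcases hy with rfl | hy
  · simp
  have hyne : y ≠ 0 := by
    intro h
    rw [h, HahnSeries.order_zero] at hy
    omega
  rw [nnnorm_alg Fq C hnorm hyne]
  have hle : -y.order ≤ (-1 : ℤ) := by omega
  calc (Fintype.card Fq : ℝ≥0) ^ (-y.order)
      ≤ (Fintype.card Fq : ℝ≥0) ^ (-1 : ℤ) :=
        zpow_le_zpow_right₀ (le_of_lt (one_lt_qnn Fq)) hle
    _ = (Fintype.card Fq : ℝ≥0)⁻¹ := zpow_neg_one _

theorem orthK {r : ℕ} {Λ : Set C} (hnorm : NormExtends Fq C) (hΛ : IsLattice Fq C Λ r)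
    {lam : Fin r → C} (hlam : IsSMB Fq C Λ lam) (a : Fin r → Kinf Fq) :
    ‖∑ i, algebraMap (Kinf Fq) C (a i) * lam i‖₊ =
      Finset.univ.sup fun i => ‖algebraMap (Kinf Fq) C (a i)‖₊ * ‖lam i‖₊ := by
  classical
  set q : ℝ≥0 := (Fintype.card Fq : ℝ≥0) with hqdef
  have hq1 : 1 < q := one_lt_qnn Fq
  have hq0 : q ≠ 0 := ne_of_gt (qnn_pos Fq)
  set alg := algebraMap (Kinf Fq) C with halgdef
  set M := Finset.univ.sup (fun i => ‖alg (a i)‖₊ * ‖lam i‖₊) with hMdef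
  by_cases hM : M = 0
  · have hz : ∀ i ∈ Finset.univ, alg (a i) * lam i = (0 : C) := by
      intro i _
      have hterm : ‖alg (a i)‖₊ * ‖lam i‖₊ ≤ M := by
        rw [hMdef]
        exact Finset.le_sup (f := fun k => ‖alg (a k)‖₊ * ‖lam k‖₊) (Finset.mem_univ i)
      rw [hM] at hterm
      have h0 : ‖alg (a i)‖₊ * ‖lam i‖₊ = 0 := le_antisymm hterm zero_le
      rcases mul_eq_zero.mp h0 with h' | h'
      · rw [nnnorm_eq_zero.mp h', zero_mul]
      · exact absurd (nnnorm_eq_zero.mp h') (lam_ne_zero Fq C hlam i)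
    rw [Finset.sum_eq_zero hz, hM, nnnorm_zero]
  have hM0 : 0 < M := pos_iff_ne_zero.mpr hM
  have huniv : (Finset.univ : Finset (Fin r)).Nonempty := by
    by_contra h
    rw [Finset.not_nonempty_iff_eq_empty] at h
    rw [hMdef, h, Finset.sup_empty] at hM0
    exact lt_irrefl _ hM0
  set L := Finset.univ.sup (fun i => ‖lam i‖₊) with hLdef
  obtain ⟨n, hn⟩ : ∃ n : ℕ, L < q ^ (n + 1) * M := by
    obtain ⟨n, hn⟩ := pow_unbounded_of_one_lt (L / M) hq1
    refine ⟨n, ?_⟩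
    have h1 : L < q ^ n * M := by
      rw [div_lt_iff₀ hM0] at hn
      exact hn
    exact lt_of_lt_of_le h1 (mul_le_mul_left (pow_le_pow_right₀ (le_of_lt hq1) (by omega)) M)
  have hdec := fun i => exists_trunc Fq ((Tinf Fq) ^ n * a i)
  choose P y hPy hysmall using hdec
  set tC := alg (Tinf Fq) with htCdef
  have htc : ‖tC‖₊ = q := nnnorm_TC Fq C hnorm
  have htcne : tC ≠ 0 := by
    intro h
    rw [h, nnnorm_zero] at htc
    exact hq0 htc.symm
  have halgP : ∀ i, tC ^ n * alg (a i) = Amap Fq C (P i) + alg (y i) := by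
    intro i
    have h1 := congrArg alg (hPy i)
    rw [map_mul, map_pow, map_add] at h1
    rw [h1]
    congr 1
    rw [Polynomial.hom_eval₂]
    rfl
  have hsplitS : ∑ i, alg (a i) * lam i =
      (tC⁻¹) ^ n * ((∑ i, Amap Fq C (P i) * lam i) + ∑ i, alg (y i) * lam i) := by
    rw [mul_add, Finset.mul_sum, Finset.mul_sum, ← Finset.sum_add_distrib]
    refine Finset.sum_congr rfl fun i _ => ?_
    have h1 : alg (a i) = (tC⁻¹) ^ n * (Amap Fq C (P i) + alg (y i)) := by
      calc alg (a i) = (tC⁻¹) ^ n * (tC ^ n * alg (a i)) := by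
            rw [← mul_assoc, inv_pow, inv_mul_cancel₀ (pow_ne_zero n htcne), one_mul]
        _ = (tC⁻¹) ^ n * (Amap Fq C (P i) + alg (y i)) := by rw [halgP i]
    rw [h1]
    ring
  have hyle : ∀ i, ‖alg (y i)‖₊ ≤ q⁻¹ := fun i => nnnorm_small Fq C hnorm (hysmall i)
  have hLle : ∀ i, ‖lam i‖₊ ≤ L := fun i => by
    rw [hLdef]
    exact Finset.le_sup (f := fun k => ‖lam k‖₊) (Finset.mem_univ i)
  have hqLlt : q⁻¹ * L < q ^ n * M := by
    have h1 : q⁻¹ * L < q⁻¹ * (q ^ (n + 1) * M) :=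
      mul_lt_mul_of_pos_left hn (by positivity)
    have h2 : q⁻¹ * (q ^ (n + 1) * M) = q ^ n * M := by
      have h3 : q⁻¹ * (q ^ (n + 1) * M) = (q⁻¹ * q) * (q ^ n * M) := by
        rw [pow_succ]; ring
      rw [h3, inv_mul_cancel₀ hq0, one_mul]
    rwa [h2] at h1
  have hE : ‖∑ i, alg (y i) * lam i‖₊ ≤ q⁻¹ * L := by
    refine le_trans (Finset.nnnorm_sum_le_sup_nnnorm _ _) (Finset.sup_le fun i _ => ?_)
    rw [nnnorm_mul]
    exact mul_le_mul' (hyle i) (hLle i)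
  have hPi : ∀ i, Amap Fq C (P i) = tC ^ n * alg (a i) - alg (y i) := by
    intro i
    rw [halgP i]
    ring
  have hPsum : ‖∑ i, Amap Fq C (P i) * lam i‖₊ = q ^ n * M := by
    rw [orthA Fq C hnorm hΛ hlam P]
    apply le_antisymm
    · refine Finset.sup_le fun i _ => ?_
      have hb : ‖Amap Fq C (P i)‖₊ ≤ max (q ^ n * ‖alg (a i)‖₊) q⁻¹ := by
        rw [hPi i, sub_eq_add_neg]
        refine le_trans (IsUltrametricDist.nnnorm_add_le_max _ _) (max_le_max ?_ ?_)
        · rw [nnnorm_mul, nnnorm_pow, htc]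
        · rw [nnnorm_neg]
          exact hyle i
      have h1 : (q ^ n * ‖alg (a i)‖₊) * ‖lam i‖₊ ≤ q ^ n * M := by
        rw [mul_assoc]
        refine mul_le_mul_right ?_ _
        rw [hMdef]
        exact Finset.le_sup (f := fun k => ‖alg (a k)‖₊ * ‖lam k‖₊) (Finset.mem_univ i)
      have h2 : q⁻¹ * ‖lam i‖₊ ≤ q ^ n * M :=
        le_trans (mul_le_mul_right (hLle i) _) (le_of_lt hqLlt)
      calc ‖Amap Fq C (P i)‖₊ * ‖lam i‖₊
          ≤ max (q ^ n * ‖alg (a i)‖₊) q⁻¹ * ‖lam i‖₊ := mul_le_mul_left hb _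
        _ = max ((q ^ n * ‖alg (a i)‖₊) * ‖lam i‖₊) (q⁻¹ * ‖lam i‖₊) :=
            max_mul_of_nonneg _ _ zero_le
        _ ≤ q ^ n * M := max_le h1 h2
    · obtain ⟨i0, _, hi0⟩ := Finset.exists_mem_eq_sup Finset.univ huniv
        (fun i => ‖alg (a i)‖₊ * ‖lam i‖₊)
      have hMi0 : M = ‖alg (a i0)‖₊ * ‖lam i0‖₊ := by rw [hMdef]; exact hi0
      have hai0pos : q⁻¹ < q ^ n * ‖alg (a i0)‖₊ := by
        have h1 : M ≤ ‖alg (a i0)‖₊ * L := by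
          rw [hMi0]
          exact mul_le_mul_right (hLle i0) _
        have h2 : M < ‖alg (a i0)‖₊ * (q ^ (n + 1) * M) := by
          refine lt_of_le_of_lt h1 ?_
          refine mul_lt_mul_of_pos_left hn ?_
          rw [pos_iff_ne_zero]
          intro h0
          rw [h0, zero_mul] at hMi0
          exact hM hMi0
        have h3 : 1 < ‖alg (a i0)‖₊ * q ^ (n + 1) := by
          by_contra hle
          push_neg at hle
          have := mul_le_mul_left hle M
          rw [one_mul, mul_assoc] at this
          exact absurd this (not_le.mpr h2)
        calc q⁻¹ = q⁻¹ * 1 := (mul_one _).symm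
          _ < q⁻¹ * (‖alg (a i0)‖₊ * q ^ (n + 1)) := by
              refine mul_lt_mul_of_pos_left h3 (by positivity)
          _ = q ^ n * ‖alg (a i0)‖₊ := by
              have h4 : q⁻¹ * (‖alg (a i0)‖₊ * q ^ (n + 1)) =
                  (q⁻¹ * q) * (q ^ n * ‖alg (a i0)‖₊) := by
                rw [pow_succ]; ring
              rw [h4, inv_mul_cancel₀ hq0, one_mul]
      have hPieq : ‖Amap Fq C (P i0)‖₊ = q ^ n * ‖alg (a i0)‖₊ := by
        rw [hPi i0, sub_eq_add_neg,
          IsUltrametricDist.nnnorm_add_eq_max_of_nnnorm_ne_nnnorm (by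
            rw [nnnorm_mul, nnnorm_pow, htc, nnnorm_neg]
            exact ne_of_gt (lt_of_le_of_lt (hyle i0) hai0pos))]
        rw [nnnorm_mul, nnnorm_pow, htc, nnnorm_neg]
        exact max_eq_left (le_of_lt (lt_of_le_of_lt (hyle i0) hai0pos))
      have : q ^ n * M = ‖Amap Fq C (P i0)‖₊ * ‖lam i0‖₊ := by
        rw [hPieq, hMi0]
        ring
      rw [this]
      exact Finset.le_sup (f := fun k => ‖Amap Fq C (P k)‖₊ * ‖lam k‖₊) (Finset.mem_univ i0)
  have hfinal : ‖(∑ i, Amap Fq C (P i) * lam i) + ∑ i, alg (y i) * lam i‖₊ = q ^ n * M := by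
    have hne : ‖∑ i, Amap Fq C (P i) * lam i‖₊ ≠ ‖∑ i, alg (y i) * lam i‖₊ := by
      rw [hPsum]
      exact ne_of_gt (lt_of_le_of_lt hE hqLlt)
    rw [IsUltrametricDist.nnnorm_add_eq_max_of_nnnorm_ne_nnnorm hne, hPsum]
    exact max_eq_left (le_of_lt (lt_of_le_of_lt hE (hPsum ▸ hqLlt)))
  rw [hsplitS, nnnorm_mul, nnnorm_pow, nnnorm_inv, htc, hfinal]
  rw [← mul_assoc, ← mul_pow, inv_mul_cancel₀ hq0, one_pow, one_mul]

/-- If `λ_1, …, λ_r` are chosen successively in an `A`-lattice `Λ` of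
rank `r` so that each `λ_i` has minimal absolute value among the elements of
`Λ ∖ (Aλ_1 + ⋯ + Aλ_{i−1})`, then `λ_1, …, λ_r` is an `A`-basis of `Λ` and is orthogonal:
`|a_1λ_1 + ⋯ + a_rλ_r| = max_i |a_i||λ_i|` for all `a_i ∈ K∞`. -/
theorem smb_is_orthogonal_basis
    (hnorm : NormExtends Fq C)
    (r : ℕ) (Λ : Set C) (hΛ : IsLattice Fq C Λ r)
    (lam : Fin r → C) (hlam : IsSMB Fq C Λ lam) :
    IsABasis Fq C Λ lam ∧
    ∀ a : Fin r → Kinf Fq,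
      ‖∑ i, algebraMap (Kinf Fq) C (a i) * lam i‖₊ =
        Finset.univ.sup fun i => ‖algebraMap (Kinf Fq) C (a i)‖₊ * ‖lam i‖₊ := by
  constructor
  · refine ⟨fun i => (hlam i).1, fun x hx => ?_⟩
    obtain ⟨aa, haa⟩ := spanA Fq C hnorm hΛ hlam x hx
    refine ⟨aa, haa, fun aa' haa' => ?_⟩
    funext i
    have hz : ∑ j, Amap Fq C (aa' j - aa j) * lam j = 0 := by
      rw [Finset.sum_congr rfl (fun j _ => by rw [map_sub, sub_mul]),
        Finset.sum_sub_distrib, ← haa, ← haa', sub_self]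
    exact sub_eq_zero.mp (indepA Fq C hnorm hΛ hlam hz i)
  · exact orthK Fq C hnorm hΛ hlam

end DrinfeldPeriods
end
end
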